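/- arXiv:2204.09787 — 3 statements merged into one kernel-verified Lean document; each statement's English description precedes it below -/
import Mathlib

section
/- Let d and K be positive integers and B ≥ 0. Let c^0, c^1, …, c^K ∈ ℝ^d be vectors in the probability simplex (all entries nonnegative and summing to 1), let b^1, …, b^K ∈ ℝ^d have all entries in [0, B], and for each k ∈ {1,…,K} set c̄^k = (1/k)·Σ_{i=0}^{k-1} c^i. Then Σ_{k=1}^K ⟨b^k, c^k⟩ ≤ 2·d·B + 2·d·(log K)·max_{k∈{1,…,K}} ( k·⟨b^k, c̄^k⟩ ). -/
lemma log_diff_ge (t a : ℝ) (ht : 0 < t) (hta : t ≤ a) :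
    a - t ≤ (Real.log a - Real.log t) * a := by
  have ha : 0 < a := ht.trans_le hta
  have h := Real.log_le_sub_one_of_pos (div_pos ht ha)
  rw [Real.log_div ht.ne' ha.ne'] at h
  have h2 : 1 - t / a ≤ Real.log a - Real.log t := by linarith
  have := mul_le_mul_of_nonneg_right h2 ha.le
  calc a - t = (1 - t/a) * a := by field_simp
    _ ≤ (Real.log a - Real.log t) * a := this

lemma key_step (B M b c t : ℝ) (hB : 0 ≤ B) (hM : 0 ≤ M) (hb0 : 0 ≤ b) (hbB : b ≤ B)
    (hc0 : 0 ≤ c) (hc1 : c ≤ 1) (ht : 0 ≤ t) (hbt : b * t ≤ M) :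
    b * c ≤ (B * min (t+c) 2 + 2*M*Real.log (max (t+c) 2))
      - (B * min t 2 + 2*M*Real.log (max t 2)) := by
  by_cases h2 : t + c ≤ 2
  · rw [min_eq_left h2, min_eq_left (by linarith), max_eq_right h2,
      max_eq_right (by linarith)]
    nlinarith
  · push_neg at h2
    by_cases h3 : (2:ℝ) ≤ t
    · rw [min_eq_right (by linarith), min_eq_right h3, max_eq_left (by linarith),
        max_eq_left h3]
      have ht0 : (0:ℝ) < t := by linarith
      have h1 := log_diff_ge t (t+c) ht0 (by linarith)
      set L := Real.log (t+c) - Real.log t with hL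
      have hL0 : 0 ≤ L := by nlinarith
      -- b*(t+c) ≤ 2*M since b*c ≤ b*t (c ≤ 1 ≤ t)
      have hbc : b * c ≤ b * t := by nlinarith
      have hfin : b * c * (t+c) ≤ 2*M*(L*(t+c)) := by nlinarith
      nlinarith
    · push_neg at h3
      have ht1 : (1:ℝ) < t := by linarith
      rw [min_eq_right (by linarith), min_eq_left h3.le, max_eq_left (by linarith),
        max_eq_right h3.le]
      have h1 := log_diff_ge 2 (t+c) (by norm_num) (by linarith)
      set L := Real.log (t+c) - Real.log 2 with hL
      have hL0 : 0 ≤ L := by nlinarith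
      have hbc : b * c ≤ b * t := by nlinarith
      have hfin : b * (t+c-2) * (t+c) ≤ 2*M*(L*(t+c)) := by nlinarith
      have h4 : b * (t+c-2) ≤ 2*M*L := by nlinarith
      nlinarith

lemma coord (K : ℕ) (hK : 0 < K) (B M : ℝ) (hB : 0 ≤ B) (hM : 0 ≤ M)
    (b c : ℕ → ℝ)
    (hb : ∀ k ∈ Finset.Icc 1 K, 0 ≤ b k ∧ b k ≤ B)
    (hc : ∀ j, j ≤ K → 0 ≤ c j ∧ c j ≤ 1)
    (hbt : ∀ k ∈ Finset.Icc 1 K, b k * ∑ j ∈ Finset.range k, c j ≤ M) :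
    ∑ k ∈ Finset.Icc 1 K, b k * c k ≤ 2*B + 2*M*Real.log K := by
  set T : ℕ → ℝ := fun k => ∑ j ∈ Finset.range k, c j with hT
  set f : ℝ → ℝ := fun t => B * min t 2 + 2*M*Real.log (max t 2) with hf
  have hT0 : ∀ k, k ≤ K → 0 ≤ T k := by
    intro k hk
    exact Finset.sum_nonneg fun j hj => (hc j (le_trans (Finset.mem_range.mp hj).le hk)).1
  have step : ∀ k ∈ Finset.Icc 1 K, b k * c k ≤ f (T (k+1)) - f (T k) := by
    intro k hk
    obtain ⟨hk1, hkK⟩ := Finset.mem_Icc.mp hk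
    have hTk1 : T (k+1) = T k + c k := Finset.sum_range_succ c k
    have := key_step B M (b k) (c k) (T k) hB hM (hb k hk).1 (hb k hk).2
      (hc k hkK).1 (hc k hkK).2 (hT0 k hkK) (hbt k hk)
    rw [hf]; dsimp only; rw [hTk1]; exact this
  have sum_le := Finset.sum_le_sum step
  have tel : ∑ k ∈ Finset.Icc 1 K, (f (T (k+1)) - f (T k)) = f (T (K+1)) - f (T 1) := by
    rw [← Finset.Ico_add_one_right_eq_Icc, Finset.sum_Ico_eq_sum_range]
    have := Finset.sum_range_sub (fun n => f (T (n+1))) K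
    simpa [add_comm, add_assoc, add_left_comm] using this
  rw [tel] at sum_le
  -- bound f (T (K+1)) and f (T 1)
  have hTK : T (K+1) ≤ (K:ℝ) + 1 := by
    calc T (K+1) ≤ ∑ j ∈ Finset.range (K+1), (1:ℝ) :=
          Finset.sum_le_sum fun j hj => (hc j (Nat.lt_succ_iff.mp (Finset.mem_range.mp hj))).2
      _ = (K:ℝ) + 1 := by simp
  have hK1 : (1:ℝ) ≤ (K:ℝ) := by exact_mod_cast hK
  have hmax : max (T (K+1)) 2 ≤ (K:ℝ) + 1 := max_le hTK (by linarith)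
  have hfK : f (T (K+1)) ≤ 2*B + 2*M*Real.log ((K:ℝ)+1) := by
    have h1 : B * min (T (K+1)) 2 ≤ 2*B := by
      have : min (T (K+1)) 2 ≤ 2 := min_le_right _ _
      nlinarith
    have h2 : Real.log (max (T (K+1)) 2) ≤ Real.log ((K:ℝ)+1) :=
      Real.log_le_log (lt_of_lt_of_le (by norm_num) (le_max_right _ _)) hmax
    simp only [hf]
    nlinarith
  have hf1 : 2*M*Real.log 2 ≤ f (T 1) := by
    have h1 : 0 ≤ B * min (T 1) 2 := by
      have : 0 ≤ min (T 1) 2 := le_min (hT0 1 hK) (by norm_num)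
      positivity
    have h2 : Real.log 2 ≤ Real.log (max (T 1) 2) :=
      Real.log_le_log (by norm_num) (le_max_right _ _)
    simp only [hf]
    nlinarith
  have hlog : Real.log ((K:ℝ)+1) - Real.log 2 ≤ Real.log K := by
    rw [← Real.log_div (by linarith) (by norm_num)]
    exact Real.log_le_log (by linarith) (by linarith)
  nlinarith

/-- Deterministic core of the "Telescope of Error" lemma: if `c^0, …, c^K` lie in the
probability simplex of `ℝ^d`, `b^1, …, b^K` have entries in `[0, B]`, and
`c̄^k = (1/k) · ∑_{i=0}^{k-1} c^i`, then
`∑_{k=1}^K ⟨b^k, c^k⟩ ≤ 2 d B + 2 d (log K) · max_{1 ≤ k ≤ K} (k · ⟨b^k, c̄^k⟩)`. -/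
theorem stmt0 (d K : ℕ) (hd : 0 < d) (hK : 0 < K) (B : ℝ) (hB : 0 ≤ B)
    (c b cbar : ℕ → Fin d → ℝ)
    (hc : ∀ k ≤ K, (∀ i, 0 ≤ c k i) ∧ ∑ i, c k i = 1)
    (hb : ∀ k, 1 ≤ k → k ≤ K → ∀ i, b k i ∈ Set.Icc (0 : ℝ) B)
    (hcbar : ∀ k, 1 ≤ k → k ≤ K →
      ∀ i, cbar k i = (1 / (k : ℝ)) * ∑ j ∈ Finset.range k, c j i) :
    ∑ k ∈ Finset.Icc 1 K, ∑ i, b k i * c k i ≤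
      2 * d * B + 2 * d * Real.log K *
        (Finset.Icc 1 K).sup' (Finset.nonempty_Icc.mpr hK)
          (fun k => (k : ℝ) * ∑ i, b k i * cbar k i) := by
  set M := (Finset.Icc 1 K).sup' (Finset.nonempty_Icc.mpr hK)
      (fun k => (k : ℝ) * ∑ i, b k i * cbar k i) with hMdef
  have hsup : ∀ k ∈ Finset.Icc 1 K, (k : ℝ) * ∑ i, b k i * cbar k i ≤ M :=
    fun k hk => Finset.le_sup' (fun m : ℕ => (m : ℝ) * ∑ i, b m i * cbar m i) hk
  -- rewrite k * ⟨b, cbar⟩ as ∑ i, b k i * T k i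
  have hsum : ∀ k ∈ Finset.Icc 1 K,
      (k : ℝ) * ∑ i, b k i * cbar k i = ∑ i, b k i * ∑ j ∈ Finset.range k, c j i := by
    intro k hk
    obtain ⟨hk1, hkK⟩ := Finset.mem_Icc.mp hk
    have hk0 : ((k:ℝ)) ≠ 0 := Nat.cast_ne_zero.mpr (by omega)
    rw [Finset.mul_sum]
    refine Finset.sum_congr rfl fun i _ => ?_
    rw [hcbar k hk1 hkK i]
    field_simp
  have hterm_nonneg : ∀ k ∈ Finset.Icc 1 K, ∀ i,
      0 ≤ b k i * ∑ j ∈ Finset.range k, c j i := by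
    intro k hk i
    obtain ⟨hk1, hkK⟩ := Finset.mem_Icc.mp hk
    exact mul_nonneg (hb k hk1 hkK i).1
      (Finset.sum_nonneg fun j hj =>
        (hc j (le_of_lt (lt_of_lt_of_le (Finset.mem_range.mp hj) hkK))).1 i)
  have hM0 : 0 ≤ M := by
    have h1 : (1:ℕ) ∈ Finset.Icc 1 K := Finset.mem_Icc.mpr ⟨le_refl 1, hK⟩
    have := hsup 1 h1
    rw [hsum 1 h1] at this
    calc (0:ℝ) ≤ ∑ i, b 1 i * ∑ j ∈ Finset.range 1, c j i :=
          Finset.sum_nonneg fun i _ => hterm_nonneg 1 h1 i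
      _ ≤ M := this
  have hMk : ∀ k ∈ Finset.Icc 1 K, ∀ i, b k i * ∑ j ∈ Finset.range k, c j i ≤ M := by
    intro k hk i
    calc b k i * ∑ j ∈ Finset.range k, c j i
        ≤ ∑ i', b k i' * ∑ j ∈ Finset.range k, c j i' :=
          Finset.single_le_sum (fun i' _ => hterm_nonneg k hk i') (Finset.mem_univ i)
      _ = (k : ℝ) * ∑ i', b k i' * cbar k i' := (hsum k hk).symm
      _ ≤ M := hsup k hk
  rw [Finset.sum_comm]
  have hcK : ∀ i : Fin d, ∀ j ≤ K, 0 ≤ c j i ∧ c j i ≤ 1 := by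
    intro i j hj
    refine ⟨(hc j hj).1 i, ?_⟩
    calc c j i ≤ ∑ i', c j i' :=
          Finset.single_le_sum (fun i' _ => (hc j hj).1 i') (Finset.mem_univ i)
      _ = 1 := (hc j hj).2
  have hbound : ∀ i : Fin d, ∑ k ∈ Finset.Icc 1 K, b k i * c k i ≤ 2*B + 2*M*Real.log K := by
    intro i
    refine coord K hK B M hB hM0 (fun k => b k i) (fun j => c j i) ?_ (hcK i) ?_
    · intro k hk
      obtain ⟨hk1, hkK⟩ := Finset.mem_Icc.mp hk
      exact ⟨(hb k hk1 hkK i).1, (hb k hk1 hkK i).2⟩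
    · intro k hk
      exact hMk k hk i
  calc ∑ i : Fin d, ∑ k ∈ Finset.Icc 1 K, b k i * c k i
      ≤ ∑ _i : Fin d, (2*B + 2*M*Real.log K) :=
        Finset.sum_le_sum fun i _ => hbound i
    _ = (d:ℝ) * (2*B + 2*M*Real.log K) := by
        rw [Finset.sum_const, Finset.card_univ, Fintype.card_fin, nsmul_eq_mul]
    _ = 2 * d * B + 2 * d * Real.log K * M := by ring
end

section
/- Let H be a real Hilbert space, let k be a positive integer, and let (D_j)_{j=1}^k be an H-valued martingale difference sequence with respect to a filtration (F_j)_{j≥0} on a probability space (i.e., each D_j is F_j-measurable and Bochner integrable with E[D_j | F_{j-1}] = 0 almost surely), and suppose ‖D_j‖_H ≤ 2 almost surely for every j. Then for every δ ∈ (0,1), with probability at least 1 − δ, ‖ (1/k)·Σ_{j=1}^k D_j ‖_H ≤ √(8·log(2/δ)) · k^{−1/2}. -/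
open MeasureTheory

open Real Set Filter
open scoped RealInnerProductSpace Topology

lemma auxP_sinh_le (x : ℝ) (hx : 0 ≤ x) : Real.sinh x ≤ x * Real.cosh x := by
  have h : MonotoneOn (fun y : ℝ => y * Real.cosh y - Real.sinh y) (Set.Ici 0) := by
    have hd : ∀ y : ℝ, HasDerivAt (fun y : ℝ => y * Real.cosh y - Real.sinh y)
        (1 * Real.cosh y + y * Real.sinh y - Real.cosh y) y := fun y =>
      ((hasDerivAt_id y).mul (Real.hasDerivAt_cosh y)).sub (Real.hasDerivAt_sinh y)
    apply monotoneOn_of_deriv_nonneg (convex_Ici 0)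
    · exact ((continuous_id.mul Real.continuous_cosh).sub Real.continuous_sinh).continuousOn
    · exact fun y _ => (hd y).differentiableAt.differentiableWithinAt
    · intro y hy
      rw [interior_Ici] at hy
      rw [(hd y).deriv]
      have hy' : (0:ℝ) < y := hy
      have : 0 ≤ Real.sinh y := Real.sinh_nonneg_iff.2 hy'.le
      nlinarith [mul_nonneg hy'.le this]
  have := h (self_mem_Ici (a := (0:ℝ))) hx hx
  simpa using this

lemma auxP_mono : MonotoneOn (fun x : ℝ => Real.sinh x / x) (Set.Ioi (0:ℝ)) := by
  have hd : ∀ y : ℝ, y ≠ 0 → HasDerivAt (fun x : ℝ => Real.sinh x / x)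
      ((Real.cosh y * y - Real.sinh y * 1) / y ^ 2) y := fun y hy =>
    (Real.hasDerivAt_sinh y).div (hasDerivAt_id y) hy
  apply monotoneOn_of_deriv_nonneg (convex_Ioi 0)
  · exact Real.continuous_sinh.continuousOn.div continuousOn_id fun x hx => ne_of_gt hx
  · rw [interior_Ioi]
    exact fun y hy => (hd y (ne_of_gt (show (0:ℝ) < y from hy))).differentiableAt.differentiableWithinAt
  · intro y hy
    rw [interior_Ioi] at hy
    have hy' : (0:ℝ) < y := hy
    rw [(hd y (ne_of_gt hy')).deriv]
    have h1 := auxP_sinh_le y hy'.le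
    have h2 : (0:ℝ) < y ^ 2 := by positivity
    apply div_nonneg _ h2.le
    nlinarith

lemma auxP_convex : ConvexOn ℝ (Set.Ici (0:ℝ)) (fun s : ℝ => Real.cosh (Real.sqrt s)) := by
  have hd : ∀ s : ℝ, 0 < s → HasDerivAt (fun s : ℝ => Real.cosh (Real.sqrt s))
      (Real.sinh (Real.sqrt s) * (1 / (2 * Real.sqrt s))) s := fun s hs =>
    (Real.hasDerivAt_cosh (Real.sqrt s)).comp s (Real.hasDerivAt_sqrt (ne_of_gt hs))
  apply MonotoneOn.convexOn_of_deriv (convex_Ici 0)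
  · exact (Real.continuous_cosh.comp Real.continuous_sqrt).continuousOn
  · rw [interior_Ici]
    exact fun s hs => (hd s (show (0:ℝ)<s from hs)).differentiableAt.differentiableWithinAt
  · rw [interior_Ici]
    intro a ha b hb hab
    rw [(hd a (show (0:ℝ)<a from ha)).deriv, (hd b (show (0:ℝ)<b from hb)).deriv]
    have hsa : 0 < Real.sqrt a := Real.sqrt_pos.2 (show (0:ℝ)<a from ha)
    have hsb : 0 < Real.sqrt b := Real.sqrt_pos.2 (show (0:ℝ)<b from hb)
    have hsa' : Real.sqrt a ∈ Set.Ioi (0:ℝ) := hsa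
    have hsb' : Real.sqrt b ∈ Set.Ioi (0:ℝ) := hsb
    have := auxP_mono hsa' hsb' (Real.sqrt_le_sqrt hab)
    have e1 : Real.sinh (Real.sqrt a) * (1 / (2 * Real.sqrt a))
        = (Real.sinh (Real.sqrt a) / Real.sqrt a) / 2 := by ring
    have e2 : Real.sinh (Real.sqrt b) * (1 / (2 * Real.sqrt b))
        = (Real.sinh (Real.sqrt b) / Real.sqrt b) / 2 := by ring
    rw [e1, e2]
    linarith [this]

noncomputable def auxPsi (l r : ℝ) : ℝ := if r = 0 then l else Real.sinh (l * r) / r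

lemma auxPsi_mul (l r : ℝ) : auxPsi l r * r = Real.sinh (l * r) := by
  unfold auxPsi
  split_ifs with h
  · simp [h]
  · field_simp

lemma auxPsi_nonneg {l r : ℝ} (hl : 0 ≤ l) (hr : 0 ≤ r) : 0 ≤ auxPsi l r := by
  unfold auxPsi
  split_ifs with h
  · exact hl
  · exact div_nonneg (Real.sinh_nonneg_iff.2 (mul_nonneg hl hr)) hr

lemma auxPsi_measurable (l : ℝ) : Measurable (auxPsi l) := by
  unfold auxPsi
  apply Measurable.ite (measurableSet_singleton 0) measurable_const
  exact (Real.measurable_sinh.comp (measurable_const.mul measurable_id)).div measurable_id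

lemma aux_pointwise {H : Type*} [NormedAddCommGroup H] [InnerProductSpace ℝ H]
    {l : ℝ} (hl : 0 ≤ l) (x d : H) (hd : ‖d‖ ≤ 2) :
    Real.cosh (l * ‖x + d‖) ≤ Real.cosh (l * ‖x‖) * Real.cosh (2 * l)
      + (Real.sinh (2 * l) / 2 * auxPsi l ‖x‖) * ⟪x, d⟫ := by
  rcases eq_or_ne x 0 with hx | hx
  · subst hx
    simp only [zero_add, norm_zero, mul_zero, Real.cosh_zero, one_mul, inner_zero_left,
      mul_zero, add_zero]
    exact Real.cosh_le_cosh.2 (by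
      rw [abs_of_nonneg (mul_nonneg hl (norm_nonneg d)), abs_of_nonneg (by linarith [mul_nonneg hl (norm_nonneg d), hl] : (0:ℝ) ≤ 2*l)]
      nlinarith [norm_nonneg d])
  · set r : ℝ := ‖x‖ with hr_def
    have hr : 0 < r := norm_pos_iff.2 hx
    set u : ℝ := ⟪x, d⟫ with hu_def
    have hu : |u| ≤ 2 * r := by
      have h1 := abs_real_inner_le_norm x d
      have h2 : ‖x‖ * ‖d‖ ≤ r * 2 := by
        apply mul_le_mul_of_nonneg_left hd hr.le
      linarith [h2]
    -- Step A: reduce to the quadratic argument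
    have hA : Real.cosh (l * ‖x + d‖) ≤ Real.cosh (Real.sqrt (l ^ 2 * (r ^ 2 + 2 * u + 4))) := by
      have hxd2 : ‖x + d‖ ^ 2 = r ^ 2 + 2 * u + ‖d‖ ^ 2 := norm_add_sq_real x d
      have h1 : l ^ 2 * ‖x + d‖ ^ 2 ≤ l ^ 2 * (r ^ 2 + 2 * u + 4) := by
        apply mul_le_mul_of_nonneg_left _ (sq_nonneg l)
        nlinarith [norm_nonneg d]
      have h2 : Real.sqrt (l ^ 2 * ‖x + d‖ ^ 2) = l * ‖x + d‖ := by
        rw [show l ^ 2 * ‖x + d‖ ^ 2 = (l * ‖x + d‖)^2 by ring]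
        exact Real.sqrt_sq (mul_nonneg hl (norm_nonneg _))
      rw [← h2]
      exact Real.cosh_le_cosh.2 (by
        rw [abs_of_nonneg (Real.sqrt_nonneg _), abs_of_nonneg (Real.sqrt_nonneg _)]
        exact Real.sqrt_le_sqrt h1)
    -- Step B: chord bound via convexity
    set θ : ℝ := (2 * r - u) / (4 * r) with hθ_def
    have hθ0 : 0 ≤ θ := by
      apply div_nonneg _ (by linarith)
      cases' abs_le.1 hu with h1 h2; linarith
    have hθ1 : 0 ≤ 1 - θ := by
      rw [hθ_def]
      rw [sub_nonneg, div_le_one (by linarith)]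
      cases' abs_le.1 hu with h1 h2; linarith
    have ha0 : (0:ℝ) ≤ l ^ 2 * (r - 2) ^ 2 := by positivity
    have hb0 : (0:ℝ) ≤ l ^ 2 * (r + 2) ^ 2 := by positivity
    have hcomb : θ * (l ^ 2 * (r - 2) ^ 2) + (1 - θ) * (l ^ 2 * (r + 2) ^ 2)
        = l ^ 2 * (r ^ 2 + 2 * u + 4) := by
      rw [hθ_def]; field_simp; ring
    have hchord := auxP_convex.2 (mem_Ici.2 ha0) (mem_Ici.2 hb0) hθ0 hθ1 (by ring : θ + (1 - θ) = 1)
    simp only [smul_eq_mul] at hchord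
    rw [hcomb] at hchord
    -- identify the sqrt values
    have hsa : Real.sqrt (l ^ 2 * (r - 2) ^ 2) = |l * (r - 2)| := by
      rw [show l ^ 2 * (r - 2) ^ 2 = (l * (r - 2))^2 by ring]
      exact Real.sqrt_sq_eq_abs _
    have hsb : Real.sqrt (l ^ 2 * (r + 2) ^ 2) = l * (r + 2) := by
      rw [show l ^ 2 * (r + 2) ^ 2 = (l * (r + 2))^2 by ring]
      exact Real.sqrt_sq (by positivity)
    rw [hsa, hsb, Real.cosh_abs] at hchord
    -- Step C: algebra
    have hcoshm : Real.cosh (l * (r - 2)) = Real.cosh (l * r) * Real.cosh (2 * l)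
        - Real.sinh (l * r) * Real.sinh (2 * l) := by
      rw [show l * (r - 2) = l * r - 2 * l by ring, Real.cosh_sub]
    have hcoshp : Real.cosh (l * (r + 2)) = Real.cosh (l * r) * Real.cosh (2 * l)
        + Real.sinh (l * r) * Real.sinh (2 * l) := by
      rw [show l * (r + 2) = l * r + 2 * l by ring, Real.cosh_add]
    have hψ : auxPsi l r = Real.sinh (l * r) / r := by
      unfold auxPsi; rw [if_neg hr.ne']
    have hfinal : θ * Real.cosh (l * (r - 2)) + (1 - θ) * Real.cosh (l * (r + 2))
        = Real.cosh (l * r) * Real.cosh (2 * l)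
          + (Real.sinh (2 * l) / 2 * auxPsi l r) * u := by
      rw [hcoshm, hcoshp, hψ, hθ_def]
      field_simp
      ring
    calc Real.cosh (l * ‖x + d‖) ≤ Real.cosh (Real.sqrt (l ^ 2 * (r ^ 2 + 2 * u + 4))) := hA
      _ ≤ θ * Real.cosh (l * (r - 2)) + (1 - θ) * Real.cosh (l * (r + 2)) := hchord
      _ = _ := hfinal

lemma aux_integral_inner_condexp_zero
    {Ω H : Type*} [NormedAddCommGroup H] [InnerProductSpace ℝ H] [CompleteSpace H]
    {m m0 : MeasurableSpace Ω} (hm : m ≤ m0)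
    {μ : Measure Ω} [IsFiniteMeasure μ] {Y D : Ω → H} (hY : StronglyMeasurable[m] Y)
    {C : ℝ} (hC : 0 ≤ C) (hYb : ∀ᵐ ω ∂μ, ‖Y ω‖ ≤ C)
    (hD : Integrable D μ) (hDc : μ[D|m] =ᵐ[μ] 0) :
    ∫ ω, ⟪Y ω, D ω⟫ ∂μ = 0 := by
  -- set integrals of D over m-measurable sets vanish
  have hset : ∀ s : Set Ω, MeasurableSet[m] s → ∫ ω in s, D ω ∂μ = 0 := by
    intro s hs
    calc ∫ ω in s, D ω ∂μ = ∫ ω in s, (μ[D|m]) ω ∂μ := (setIntegral_condExp hm hD hs).symm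
      _ = ∫ ω in s, (0 : H) ∂μ := integral_congr_ae (ae_restrict_of_ae hDc)
      _ = 0 := by simp
  -- integrability of inner products with simple functions
  have hint : ∀ (φ : Ω → H), AEStronglyMeasurable φ μ → (∃ c : ℝ, ∀ᵐ ω ∂μ, ‖φ ω‖ ≤ c) →
      Integrable (fun ω => ⟪φ ω, D ω⟫) μ := by
    rintro φ hφmeas ⟨c, hc⟩
    refine Integrable.mono' (hD.norm.const_mul c) (hφmeas.inner hD.aestronglyMeasurable) ?_
    filter_upwards [hc] with ω hω
    calc ‖⟪φ ω, D ω⟫‖ ≤ ‖φ ω‖ * ‖D ω‖ := by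
          rw [Real.norm_eq_abs]; exact abs_real_inner_le_norm _ _
      _ ≤ c * ‖D ω‖ := mul_le_mul_of_nonneg_right hω (norm_nonneg _)
  -- step: simple functions (w.r.t. m)
  have hsimple : ∀ (φ : @SimpleFunc Ω m H), ∫ ω, ⟪φ ω, D ω⟫ ∂μ = 0 := by
    intro φ
    induction φ using SimpleFunc.induction with
    | @const c s hs =>
      have h1 : ∀ ω, (⟪(@SimpleFunc.piecewise Ω H m s hs (@SimpleFunc.const Ω H m c)
          (@SimpleFunc.const Ω H m 0)) ω, D ω⟫ : ℝ)
          = Set.indicator s (fun ω => (⟪c, D ω⟫ : ℝ)) ω := by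
        intro ω
        by_cases hω : ω ∈ s <;>
          simp [SimpleFunc.piecewise_apply, Set.indicator, hω]
      simp only [h1]
      rw [integral_indicator (hm s hs), integral_inner hD.integrableOn c, hset s hs,
        inner_zero_right]
    | @add f g hdisj hf hg =>
      have hif : Integrable (fun ω => ⟪f ω, D ω⟫) μ := by
        obtain ⟨c, hc⟩ := @SimpleFunc.exists_forall_norm_le Ω H m _ f
        exact hint f ((f.stronglyMeasurable.mono hm).aestronglyMeasurable) ⟨c, ae_of_all _ hc⟩
      have hig : Integrable (fun ω => ⟪g ω, D ω⟫) μ := by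
        obtain ⟨c, hc⟩ := @SimpleFunc.exists_forall_norm_le Ω H m _ g
        exact hint g ((g.stronglyMeasurable.mono hm).aestronglyMeasurable) ⟨c, ae_of_all _ hc⟩
      simp only [SimpleFunc.coe_add, Pi.add_apply, inner_add_left]
      rw [integral_add hif hig, hf, hg, add_zero]
  -- approximation
  set fs : ℕ → @SimpleFunc Ω m H := hY.approxBounded C with hfs_def
  have hbound : ∀ n, ∀ᵐ ω ∂μ, ‖⟪fs n ω, D ω⟫‖ ≤ C * ‖D ω‖ := by
    intro n
    apply ae_of_all
    intro ω
    calc ‖⟪fs n ω, D ω⟫‖ ≤ ‖fs n ω‖ * ‖D ω‖ := by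
          rw [Real.norm_eq_abs]; exact abs_real_inner_le_norm _ _
      _ ≤ C * ‖D ω‖ := mul_le_mul_of_nonneg_right
          (hY.norm_approxBounded_le hC n ω) (norm_nonneg _)
  have htend : Tendsto (fun n => ∫ ω, ⟪fs n ω, D ω⟫ ∂μ) atTop
      (𝓝 (∫ ω, ⟪Y ω, D ω⟫ ∂μ)) := by
    refine tendsto_integral_of_dominated_convergence (fun ω => C * ‖D ω‖)
      (fun n => ((fs n).stronglyMeasurable.mono hm).aestronglyMeasurable.inner
        hD.aestronglyMeasurable) (hD.norm.const_mul C) hbound ?_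
    filter_upwards [hY.tendsto_approxBounded_ae hYb] with ω hω
    exact hω.inner tendsto_const_nhds
  have hzero : (fun n => ∫ ω, ⟪fs n ω, D ω⟫ ∂μ) = fun _ => (0:ℝ) := by
    funext n; exact hsimple (fs n)
  rw [hzero] at htend
  exact tendsto_nhds_unique htend tendsto_const_nhds

/-- Concentration of averaged bounded Hilbert-space-valued martingale differences:
if `D_1, …, D_k` is a martingale difference sequence with `‖D_j‖ ≤ 2` a.s., then with
probability at least `1 − δ`,
`‖(1/k) ∑_{j=1}^k D_j‖ ≤ √(8 log(2/δ)) · k^{−1/2}`. -/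
theorem stmt3 {Ω H : Type*} [MeasurableSpace Ω]
    [NormedAddCommGroup H] [InnerProductSpace ℝ H] [CompleteSpace H]
    (μ : Measure Ω) [IsProbabilityMeasure μ]
    (ℱ : Filtration ℕ (inferInstance : MeasurableSpace Ω))
    (k : ℕ) (hk : 0 < k) (D : ℕ → Ω → H)
    (hmeas : ∀ j, 1 ≤ j → j ≤ k → StronglyMeasurable[ℱ j] (D j))
    (hint : ∀ j, 1 ≤ j → j ≤ k → Integrable (D j) μ)
    (hmds : ∀ j, 1 ≤ j → j ≤ k → μ[D j | ℱ (j - 1)] =ᵐ[μ] 0)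
    (hbdd : ∀ j, 1 ≤ j → j ≤ k → ∀ᵐ ω ∂μ, ‖D j ω‖ ≤ 2)
    (δ : ℝ) (hδ0 : 0 < δ) (hδ1 : δ < 1) :
    ENNReal.ofReal (1 - δ) ≤
      μ {ω | ‖(1 / (k : ℝ)) • ∑ j ∈ Finset.Icc 1 k, D j ω‖ ≤
        Real.sqrt (8 * Real.log (2 / δ)) * (k : ℝ) ^ (-(1 : ℝ) / 2)} := by
  classical
  set L : ℝ := Real.log (2 / δ) with hL_def
  have hL : 0 < L := Real.log_pos (by rw [lt_div_iff₀ hδ0]; linarith)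
  have hk0 : (0:ℝ) < k := Nat.cast_pos.2 hk
  set t : ℝ := Real.sqrt (8 * k * L) with ht_def
  have ht : 0 < t := Real.sqrt_pos.2 (by positivity)
  have ht2 : t ^ 2 = 8 * k * L := Real.sq_sqrt (by positivity)
  set l : ℝ := t / (4 * k) with hl_def
  have hl : 0 < l := by positivity
  have hlt : l * t = 2 * L := by
    rw [hl_def]
    field_simp
    nlinarith [ht2]
  have h2kl : 2 * (k:ℝ) * l ^ 2 = L := by
    rw [hl_def]
    field_simp
    nlinarith [ht2]
  -- partial sums
  set S : ℕ → Ω → H := fun n ω => ∑ j ∈ Finset.Icc 1 n, D j ω with hS_def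
  have hSmeas : ∀ n, n ≤ k → StronglyMeasurable[ℱ n] (S n) := by
    intro n hn
    apply Finset.stronglyMeasurable_fun_sum
    intro j hj
    rw [Finset.mem_Icc] at hj
    exact (hmeas j hj.1 (hj.2.trans hn)).mono (ℱ.mono hj.2)
  have hSmeas0 : ∀ n, n ≤ k → StronglyMeasurable (S n) :=
    fun n hn => (hSmeas n hn).mono (ℱ.le n)
  have hDae : ∀ᵐ ω ∂μ, ∀ j ∈ Finset.Icc 1 k, ‖D j ω‖ ≤ 2 := by
    have h := (ae_ball_iff ((Finset.Icc 1 k : Finset ℕ).countable_toSet)).2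
      (fun j hj => hbdd j (Finset.mem_Icc.1 (Finset.mem_coe.1 hj)).1
        (Finset.mem_Icc.1 (Finset.mem_coe.1 hj)).2)
    filter_upwards [h] with ω hω j hj using hω j (Finset.mem_coe.2 hj)
  have hSbdd : ∀ n, n ≤ k → ∀ᵐ ω ∂μ, ‖S n ω‖ ≤ 2 * n := by
    intro n hn
    filter_upwards [hDae] with ω hω
    calc ‖S n ω‖ ≤ ∑ j ∈ Finset.Icc 1 n, ‖D j ω‖ := norm_sum_le _ _
      _ ≤ ∑ _j ∈ Finset.Icc 1 n, (2:ℝ) := by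
          apply Finset.sum_le_sum
          intro j hj
          rw [Finset.mem_Icc] at hj
          exact hω j (Finset.mem_Icc.2 ⟨hj.1, hj.2.trans hn⟩)
      _ = 2 * n := by
          rw [Finset.sum_const, Nat.card_Icc]
          simp [mul_comm]
  have hcosh_meas : ∀ n, n ≤ k → StronglyMeasurable (fun ω => Real.cosh (l * ‖S n ω‖)) :=
    fun n hn => (Real.continuous_cosh.comp
      (continuous_const.mul continuous_norm)).comp_stronglyMeasurable (hSmeas0 n hn)
  have hcosh_int : ∀ n, n ≤ k → Integrable (fun ω => Real.cosh (l * ‖S n ω‖)) μ := by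
    intro n hn
    refine Integrable.mono' (integrable_const (Real.cosh (l * (2*n))))
      (hcosh_meas n hn).aestronglyMeasurable ?_
    filter_upwards [hSbdd n hn] with ω hω
    rw [Real.norm_eq_abs, abs_of_pos (Real.cosh_pos _)]
    exact Real.cosh_le_cosh.2 (by
      rw [abs_of_nonneg (by positivity), abs_of_nonneg (by positivity)]
      exact mul_le_mul_of_nonneg_left hω hl.le)
  -- key induction
  have key : ∀ n, n ≤ k → ∫ ω, Real.cosh (l * ‖S n ω‖) ∂μ ≤ Real.cosh (2*l) ^ n := by
    intro n
    induction n with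
    | zero =>
      intro _
      have h0 : ∀ ω : Ω, S 0 ω = 0 := by
        intro ω; rw [hS_def]; simp
      simp only [h0, norm_zero, mul_zero, Real.cosh_zero, pow_zero]
      simp
    | succ n ih =>
      intro hn1
      have hn : n ≤ k := Nat.le_of_succ_le hn1
      have ihn := ih hn
      have hD1 : Integrable (D (n+1)) μ := hint (n+1) (by omega) hn1
      have hDb : ∀ᵐ ω ∂μ, ‖D (n+1) ω‖ ≤ 2 := hbdd (n+1) (by omega) hn1
      have hDc : μ[D (n+1) | ℱ n] =ᵐ[μ] 0 := by
        have := hmds (n+1) (by omega) hn1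
        simpa using this
      have hsinh2l : 0 ≤ Real.sinh (2*l) := Real.sinh_nonneg_iff.2 (by positivity)
      set Y : Ω → H := fun ω => (Real.sinh (2*l)/2 * auxPsi l ‖S n ω‖) • S n ω with hY_def
      have hYmeas : StronglyMeasurable[ℱ n] Y := by
        apply StronglyMeasurable.smul _ (hSmeas n hn)
        apply Measurable.stronglyMeasurable
        exact measurable_const.mul ((auxPsi_measurable l).comp (hSmeas n hn).norm.measurable)
      set C : ℝ := Real.sinh (2*l)/2 * Real.sinh (l * (2*n)) with hC_def
      have hC : 0 ≤ C := mul_nonneg (by linarith) (Real.sinh_nonneg_iff.2 (by positivity))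
      have hYbdd : ∀ᵐ ω ∂μ, ‖Y ω‖ ≤ C := by
        filter_upwards [hSbdd n hn] with ω hω
        rw [hY_def]
        rw [norm_smul, Real.norm_eq_abs,
          abs_of_nonneg (mul_nonneg (by linarith) (auxPsi_nonneg hl.le (norm_nonneg _)))]
        calc Real.sinh (2*l)/2 * auxPsi l ‖S n ω‖ * ‖S n ω‖
            = Real.sinh (2*l)/2 * Real.sinh (l * ‖S n ω‖) := by
              rw [mul_assoc, auxPsi_mul]
          _ ≤ C := by
              apply mul_le_mul_of_nonneg_left _ (by linarith)
              exact Real.sinh_le_sinh.2 (mul_le_mul_of_nonneg_left hω hl.le)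
      have hzero : ∫ ω, ⟪Y ω, D (n+1) ω⟫ ∂μ = 0 :=
        aux_integral_inner_condexp_zero (ℱ.le n) hYmeas hC hYbdd hD1 hDc
      have hYmeas0 : AEStronglyMeasurable Y μ := (hYmeas.mono (ℱ.le n)).aestronglyMeasurable
      have hinner_int : Integrable (fun ω => ⟪Y ω, D (n+1) ω⟫) μ := by
        refine Integrable.mono' (hD1.norm.const_mul C)
          (hYmeas0.inner hD1.aestronglyMeasurable) ?_
        filter_upwards [hYbdd] with ω hω
        calc ‖⟪Y ω, D (n+1) ω⟫‖ ≤ ‖Y ω‖ * ‖D (n+1) ω‖ := by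
              rw [Real.norm_eq_abs]; exact abs_real_inner_le_norm _ _
          _ ≤ C * ‖D (n+1) ω‖ := mul_le_mul_of_nonneg_right hω (norm_nonneg _)
      have hSsucc : ∀ ω, S (n+1) ω = S n ω + D (n+1) ω := by
        intro ω
        rw [hS_def]
        exact Finset.sum_Icc_succ_top (Nat.succ_le_succ (Nat.zero_le n)) _
      have hptwise : ∀ᵐ ω ∂μ, Real.cosh (l * ‖S (n+1) ω‖) ≤
          Real.cosh (l * ‖S n ω‖) * Real.cosh (2*l) + ⟪Y ω, D (n+1) ω⟫ := by
        filter_upwards [hDb] with ω hω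
        rw [hSsucc ω]
        have h := aux_pointwise hl.le (S n ω) (D (n+1) ω) hω
        have h2 : (⟪Y ω, D (n+1) ω⟫ : ℝ)
            = (Real.sinh (2*l)/2 * auxPsi l ‖S n ω‖) * ⟪S n ω, D (n+1) ω⟫ :=
          real_inner_smul_left _ _ _
        rw [h2]
        exact h
      calc ∫ ω, Real.cosh (l * ‖S (n+1) ω‖) ∂μ
          ≤ ∫ ω, (Real.cosh (l * ‖S n ω‖) * Real.cosh (2*l) + ⟪Y ω, D (n+1) ω⟫) ∂μ :=
            integral_mono_ae (hcosh_int (n+1) hn1)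
              (((hcosh_int n hn).mul_const _).add hinner_int) hptwise
        _ = (∫ ω, Real.cosh (l * ‖S n ω‖) ∂μ) * Real.cosh (2*l)
              + ∫ ω, ⟪Y ω, D (n+1) ω⟫ ∂μ := by
            rw [integral_add ((hcosh_int n hn).mul_const _) hinner_int, integral_mul_const]
        _ = (∫ ω, Real.cosh (l * ‖S n ω‖) ∂μ) * Real.cosh (2*l) := by rw [hzero, add_zero]
        _ ≤ Real.cosh (2*l) ^ n * Real.cosh (2*l) :=
            mul_le_mul_of_nonneg_right ihn (Real.cosh_pos _).le
        _ = Real.cosh (2*l) ^ (n+1) := (pow_succ _ n).symm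
  -- Markov inequality and conclusion
  set f : Ω → ℝ := fun ω => Real.cosh (l * ‖S k ω‖) with hf_def
  set ε : ℝ := Real.cosh (l * t) with hε_def
  have hmar := mul_meas_ge_le_integral_of_nonneg (μ := μ) (f := f)
    (ae_of_all _ fun ω => (Real.cosh_pos _).le) (hcosh_int k le_rfl) ε
  have hIexp : ∫ ω, f ω ∂μ ≤ 2/δ := by
    calc ∫ ω, f ω ∂μ ≤ Real.cosh (2*l)^k := key k le_rfl
      _ ≤ Real.exp (2*l^2) ^ k := by
          apply pow_le_pow_left₀ (Real.cosh_pos _).le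
          calc Real.cosh (2*l) ≤ Real.exp ((2*l)^2/2) := Real.cosh_le_exp_half_sq (2*l)
            _ = Real.exp (2*l^2) := by ring_nf
      _ = Real.exp ((k:ℝ) * (2*l^2)) := (Real.exp_nat_mul _ k).symm
      _ = Real.exp L := by rw [show (k:ℝ)*(2*l^2) = 2*k*l^2 by ring, h2kl]
      _ = 2/δ := Real.exp_log (by positivity)
  have hεlb : (2/δ)^2/2 ≤ ε := by
    rw [hε_def, hlt, Real.cosh_eq]
    have h1 : Real.exp (2*L) = (2/δ)^2 := by
      rw [show 2*L = L + L by ring, Real.exp_add, hL_def, Real.exp_log (by positivity)]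
      ring
    nlinarith [Real.exp_pos (-(2*L)), h1]
  have hbadmeas : MeasurableSet {ω | ε ≤ f ω} :=
    measurableSet_le measurable_const (hcosh_meas k le_rfl).measurable
  have htoReal : (μ {ω | ε ≤ f ω}).toReal ≤ δ := by
    set T : ℝ := (μ {ω | ε ≤ f ω}).toReal with hT_def
    have hT0 : 0 ≤ T := ENNReal.toReal_nonneg
    have h1 : ε * T ≤ 2/δ := le_trans hmar hIexp
    have h2 : (2/δ)^2/2 * T ≤ 2/δ := le_trans (mul_le_mul_of_nonneg_right hεlb hT0) h1
    have e : (2/δ)^2/2 = 2/δ^2 := by field_simp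
    rw [e] at h2
    rw [div_mul_eq_mul_div, div_le_div_iff₀ (by positivity) (by positivity)] at h2
    nlinarith [h2, hδ0, hT0]
  have hbadle : μ {ω | ε ≤ f ω} ≤ ENNReal.ofReal δ :=
    (ENNReal.le_ofReal_iff_toReal_le (measure_ne_top μ _) hδ0.le).2 htoReal
  have hsub : {ω | ε ≤ f ω}ᶜ ⊆ {ω | ‖(1 / (k : ℝ)) • ∑ j ∈ Finset.Icc 1 k, D j ω‖ ≤
      Real.sqrt (8 * L) * (k : ℝ) ^ (-(1 : ℝ) / 2)} := by
    intro ω hω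
    simp only [Set.mem_compl_iff, Set.mem_setOf_eq, not_le] at hω
    have hSle : ‖S k ω‖ ≤ t := by
      by_contra hcon
      push_neg at hcon
      have : ε ≤ f ω := Real.cosh_le_cosh.2 (by
        rw [abs_of_nonneg (by positivity), abs_of_nonneg (by positivity)]
        exact mul_le_mul_of_nonneg_left hcon.le hl.le)
      exact absurd this (not_le.2 hω)
    show ‖(1 / (k : ℝ)) • S k ω‖ ≤ Real.sqrt (8 * L) * (k : ℝ) ^ (-(1 : ℝ) / 2)
    rw [norm_smul, Real.norm_eq_abs, abs_of_pos (by positivity)]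
    have hsqrtk : (0:ℝ) < Real.sqrt k := Real.sqrt_pos.2 hk0
    have htarget : Real.sqrt (8*L) * (k:ℝ)^(-(1:ℝ)/2) = Real.sqrt (8*L) / Real.sqrt k := by
      rw [show (-(1:ℝ)/2) = -(1/2 : ℝ) by ring, Real.rpow_neg hk0.le, ← Real.sqrt_eq_rpow,
        div_eq_mul_inv]
    rw [htarget]
    have htk : t = Real.sqrt (8*L) * Real.sqrt k := by
      rw [ht_def, show 8*(k:ℝ)*L = (8*L)*k by ring, Real.sqrt_mul (by positivity)]
    have hstep : (1/(k:ℝ)) * ‖S k ω‖ ≤ (1/(k:ℝ)) * t :=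
      mul_le_mul_of_nonneg_left hSle (by positivity)
    refine hstep.trans (le_of_eq ?_)
    rw [htk]
    have hk_eq : (k:ℝ) = Real.sqrt k * Real.sqrt k := (Real.mul_self_sqrt hk0.le).symm
    rw [hk_eq]
    field_simp
    rw [Real.sqrt_sq hsqrtk.le]
  calc ENNReal.ofReal (1-δ) = 1 - ENNReal.ofReal δ := by
        rw [ENNReal.ofReal_sub _ hδ0.le, ENNReal.ofReal_one]
    _ ≤ 1 - μ {ω | ε ≤ f ω} := tsub_le_tsub_left hbadle 1
    _ = μ ({ω | ε ≤ f ω}ᶜ) := (prob_compl_eq_one_sub hbadmeas).symm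
    _ ≤ _ := measure_mono hsub
end

section
/- Let (S, μ_S) and (O, μ_O) be σ-finite measure spaces. Let E : O × S → [0,∞) be measurable with ∫_O E(o,s) dμ_O(o) = 1 for every s ∈ S. Let ψ_1, …, ψ_d be probability densities on S with respect to μ_S, and define ν_j(o) = ∫_S E(o,s)·ψ_j(s) dμ_S(s) for j ∈ {1,…,d}. Let K̃ : O × O → ℝ be bounded measurable, define Λ ∈ ℝ^{d×d} by Λ_{ij} = ∫∫ K̃(o,o′)·ν_i(o)·ν_j(o′) dμ_O(o)dμ_O(o′), and assume Λ is invertible. Define Z(s,o) = Σ_{i,j} ψ_i(s)·[Λ^{-1}]_{ij}·∫_O K̃(o′,o)·ν_j(o′) dμ_O(o′). Then for every ℓ ∈ {1,…,d} and every s ∈ S, ∫_O Z(s,o)·ν_ℓ(o) dμ_O(o) = ψ_ℓ(s); consequently, for every f in the linear span of {ψ_1,…,ψ_d}, writing (𝕆f)(o) = ∫_S E(o,s)·f(s) dμ_S(s), one has ∫_O Z(s,o)·(𝕆f)(o) dμ_O(o) = f(s) for every s ∈ S. -/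
open MeasureTheory

/-- Lemma A.3 (first claim): the explicitly constructed bridge kernel `Z` is a left
inverse of the emission operator `𝕆` on the linear span of the basis state densities
`ψ_1, …, ψ_d`: `∫ Z(s,o) ν_ℓ(o) dμ_O(o) = ψ_ℓ(s)` and hence
`∫ Z(s,o) (𝕆f)(o) dμ_O(o) = f(s)` for every `f ∈ span{ψ_1,…,ψ_d}`. -/
theorem stmt7 {S O : Type*} [MeasurableSpace S] [MeasurableSpace O]
    (μS : Measure S) [SigmaFinite μS] (μO : Measure O) [SigmaFinite μO]
    (E : O → S → ℝ)
    (hEmeas : Measurable fun p : O × S => E p.1 p.2)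
    (hEnn : ∀ o s, 0 ≤ E o s)
    (hEint : ∀ s, ∫ o, E o s ∂μO = 1)
    (d : ℕ) (ψ : Fin d → S → ℝ)
    (hψmeas : ∀ j, Measurable (ψ j))
    (hψnn : ∀ j s, 0 ≤ ψ j s)
    (hψint : ∀ j, ∫ s, ψ j s ∂μS = 1)
    (ν : Fin d → O → ℝ)
    (hν : ∀ j o, ν j o = ∫ s, E o s * ψ j s ∂μS)
    (Ktil : O → O → ℝ)
    (hKmeas : Measurable fun p : O × O => Ktil p.1 p.2)
    (hKbdd : ∃ C, ∀ x y, |Ktil x y| ≤ C)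
    (Λ : Matrix (Fin d) (Fin d) ℝ)
    (hΛ : ∀ i j, Λ i j = ∫ o, (∫ o', Ktil o o' * ν i o * ν j o' ∂μO) ∂μO)
    (hΛinv : IsUnit Λ.det)
    (Z : S → O → ℝ)
    (hZ : ∀ s o, Z s o =
      ∑ i, ∑ j, ψ i s * Λ⁻¹ i j * ∫ o', Ktil o' o * ν j o' ∂μO) :
    (∀ ℓ : Fin d, ∀ s : S, ∫ o, Z s o * ν ℓ o ∂μO = ψ ℓ s) ∧
    (∀ f : S → ℝ, f ∈ Submodule.span ℝ (Set.range ψ) →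
      ∀ s : S, ∫ o, Z s o * (∫ t, E o t * f t ∂μS) ∂μO = f s) := by
  classical
  obtain ⟨C₀, hC₀⟩ := hKbdd
  set C : ℝ := max C₀ 0 with hCdef
  have hKC : ∀ x y, |Ktil x y| ≤ C := fun x y => (hC₀ x y).trans (le_max_left _ _)
  -- integrability of (o,t) ↦ E o t * ψ j t on the product measure
  have hFmeas : ∀ j, Measurable fun p : O × S => E p.1 p.2 * ψ j p.2 := fun j =>
    hEmeas.mul ((hψmeas j).comp measurable_snd)
  have hFint : ∀ j, Integrable (fun p : O × S => E p.1 p.2 * ψ j p.2) (μO.prod μS) := by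
    intro j
    rw [integrable_prod_iff' (hFmeas j).aestronglyMeasurable]
    constructor
    · refine Filter.Eventually.of_forall fun t => ?_
      simpa using (integrable_of_integral_eq_one (hEint t)).mul_const (ψ j t)
    have he : (fun t => ∫ o, ‖E o t * ψ j t‖ ∂μO) = ψ j := by
      funext t
      have h1 : ∀ o, ‖E o t * ψ j t‖ = E o t * ψ j t := fun o =>
        Real.norm_of_nonneg (mul_nonneg (hEnn o t) (hψnn j t))
      simp_rw [h1]
      rw [integral_mul_const, hEint t, one_mul]
    rw [he]
    exact integrable_of_integral_eq_one (hψint j)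
  have hνeq : ∀ j, ν j = fun o => ∫ t, E o t * ψ j t ∂μS := fun j => funext fun o => hν j o
  have hνint : ∀ j, Integrable (ν j) μO := fun j => by
    rw [hνeq j]; exact (hFint j).integral_prod_left
  have hνnn : ∀ j o, 0 ≤ ν j o := fun j o => by
    rw [hν]; exact integral_nonneg fun t => mul_nonneg (hEnn o t) (hψnn j t)
  have hνsm : ∀ j, StronglyMeasurable (ν j) := fun j => by
    rw [hνeq j]; exact (hFmeas j).stronglyMeasurable.integral_prod_right'
  -- the function g j o = ∫ o', Ktil o' o * ν j o'
  set g : Fin d → O → ℝ := fun j o => ∫ o', Ktil o' o * ν j o' ∂μO with hgdef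
  have hKsl : ∀ o : O, Measurable fun o' => Ktil o' o := fun o =>
    hKmeas.comp (measurable_id.prodMk measurable_const)
  have hgbd : ∀ j o, |g j o| ≤ C * ∫ o', ν j o' ∂μO := by
    intro j o
    have h1 : |g j o| ≤ ∫ o', ‖Ktil o' o * ν j o'‖ ∂μO := by
      rw [← Real.norm_eq_abs]; exact norm_integral_le_integral_norm _
    refine h1.trans ?_
    rw [← integral_const_mul]
    refine integral_mono ?_ ((hνint j).const_mul C) fun o' => ?_
    · exact ((hνint j).bdd_mul (hKsl o).aestronglyMeasurable
        (c := C) (Filter.Eventually.of_forall fun x => by rw [Real.norm_eq_abs]; exact hKC x o)).norm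
    · rw [Real.norm_eq_abs, abs_mul, abs_of_nonneg (hνnn j o')]
      exact mul_le_mul_of_nonneg_right (hKC o' o) (hνnn j o')
  have hgsm : ∀ j, StronglyMeasurable (g j) := by
    intro j
    have : StronglyMeasurable fun p : O × O => Ktil p.2 p.1 * ν j p.2 :=
      ((hKmeas.comp measurable_swap).mul ((hνsm j).measurable.comp measurable_snd)).stronglyMeasurable
    exact this.integral_prod_right'
  have hgν_int : ∀ j ℓ, Integrable (fun o => g j o * ν ℓ o) μO := fun j ℓ =>
    (hνint ℓ).bdd_mul (hgsm j).aestronglyMeasurable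
      (c := C * ∫ o', ν j o' ∂μO) (Filter.Eventually.of_forall fun x => by rw [Real.norm_eq_abs]; exact hgbd j x)
  -- Fubini: ∫ g j * ν ℓ = Λ j ℓ
  have hkey : ∀ j ℓ, ∫ o, g j o * ν ℓ o ∂μO = Λ j ℓ := by
    intro j ℓ
    have hH : Integrable (Function.uncurry fun o o' => Ktil o' o * ν j o' * ν ℓ o)
        (μO.prod μO) := by
      have h1 : Integrable (fun z : O × O => ν ℓ z.1 * ν j z.2) (μO.prod μO) :=
        (hνint ℓ).mul_prod (hνint j)
      have h2 := h1.bdd_mul (hKmeas.comp measurable_swap).aestronglyMeasurable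
        (c := C) (Filter.Eventually.of_forall fun x => by rw [Real.norm_eq_abs]; exact hKC x.2 x.1)
      exact h2.congr (Filter.Eventually.of_forall fun p => by
        simp only [Function.uncurry, Function.comp, Prod.fst_swap, Prod.snd_swap]; ring)
    have h3 : ∀ o, g j o * ν ℓ o = ∫ o', Ktil o' o * ν j o' * ν ℓ o ∂μO := fun o =>
      (integral_mul_const _ _).symm
    calc ∫ o, g j o * ν ℓ o ∂μO
        = ∫ o, ∫ o', Ktil o' o * ν j o' * ν ℓ o ∂μO ∂μO := by simp_rw [h3]
      _ = ∫ o', ∫ o, Ktil o' o * ν j o' * ν ℓ o ∂μO ∂μO := integral_integral_swap hH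
      _ = Λ j ℓ := (hΛ j ℓ).symm
  -- expansion of Z s o * ν ℓ o
  have hZν : ∀ ℓ (s : S) (o : O), Z s o * ν ℓ o =
      ∑ i, ∑ j, ψ i s * Λ⁻¹ i j * (g j o * ν ℓ o) := by
    intro ℓ s o
    rw [hZ, Finset.sum_mul]
    exact Finset.sum_congr rfl fun i _ => by
      rw [Finset.sum_mul]; exact Finset.sum_congr rfl fun j _ => by ring
  have hZνint : ∀ ℓ (s : S), Integrable (fun o => Z s o * ν ℓ o) μO := fun ℓ s =>
    (integrable_finset_sum _ fun i _ => integrable_finset_sum _ fun j _ =>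
      (hgν_int j ℓ).const_mul _).congr
      (Filter.Eventually.of_forall fun o => (hZν ℓ s o).symm)
  -- first claim
  have main : ∀ ℓ : Fin d, ∀ s : S, ∫ o, Z s o * ν ℓ o ∂μO = ψ ℓ s := by
    intro ℓ s
    calc ∫ o, Z s o * ν ℓ o ∂μO
        = ∫ o, ∑ i, ∑ j, ψ i s * Λ⁻¹ i j * (g j o * ν ℓ o) ∂μO := by simp_rw [hZν ℓ s]
      _ = ∑ i, ∑ j, ∫ o, ψ i s * Λ⁻¹ i j * (g j o * ν ℓ o) ∂μO := by
          rw [integral_finset_sum _ fun i _ =>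
            integrable_finset_sum _ fun j _ => (hgν_int j ℓ).const_mul _]
          exact Finset.sum_congr rfl fun i _ =>
            integral_finset_sum _ fun j _ => (hgν_int j ℓ).const_mul _
      _ = ∑ i, ∑ j, ψ i s * Λ⁻¹ i j * Λ j ℓ := by
          refine Finset.sum_congr rfl fun i _ => Finset.sum_congr rfl fun j _ => ?_
          rw [integral_const_mul, hkey j ℓ]
      _ = ∑ i, ψ i s * (Λ⁻¹ * Λ) i ℓ := by
          refine Finset.sum_congr rfl fun i _ => ?_
          rw [Matrix.mul_apply, Finset.mul_sum]
          exact Finset.sum_congr rfl fun j _ => by ring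
      _ = ψ ℓ s := by
          rw [Matrix.nonsing_inv_mul Λ hΛinv]
          simp [Matrix.one_apply]
  refine ⟨main, ?_⟩
  intro f hf s
  obtain ⟨c, hc⟩ := (Submodule.mem_span_range_iff_exists_fun ℝ).mp hf
  have hfe : ∀ t, f t = ∑ j, c j * ψ j t := fun t => by
    rw [← hc]; simp
  have hae : ∀ᵐ o ∂μO, (∫ t, E o t * f t ∂μS) = ∑ j, c j * ν j o := by
    have h1 : ∀ᵐ o ∂μO, ∀ j : Fin d, Integrable (fun t => E o t * ψ j t) μS := by
      rw [ae_all_iff]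
      exact fun j => (hFint j).prod_right_ae
    filter_upwards [h1] with o ho
    have h2 : ∀ t, E o t * f t = ∑ j, c j * (E o t * ψ j t) := by
      intro t
      rw [hfe t, Finset.mul_sum]
      exact Finset.sum_congr rfl fun j _ => by ring
    calc ∫ t, E o t * f t ∂μS
        = ∫ t, ∑ j, c j * (E o t * ψ j t) ∂μS := by simp_rw [h2]
      _ = ∑ j, ∫ t, c j * (E o t * ψ j t) ∂μS :=
          integral_finset_sum _ fun j _ => (ho j).const_mul _
      _ = ∑ j, c j * ν j o := by
          refine Finset.sum_congr rfl fun j _ => ?_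
          rw [integral_const_mul, hν j o]
  calc ∫ o, Z s o * (∫ t, E o t * f t ∂μS) ∂μO
      = ∫ o, ∑ j, c j * (Z s o * ν j o) ∂μO := by
        refine integral_congr_ae ?_
        filter_upwards [hae] with o ho
        rw [ho, Finset.mul_sum]
        exact Finset.sum_congr rfl fun j _ => by ring
    _ = ∑ j, c j * ∫ o, Z s o * ν j o ∂μO := by
        rw [integral_finset_sum _ fun j _ => (hZνint j s).const_mul _]
        exact Finset.sum_congr rfl fun j _ => integral_const_mul _ _
    _ = ∑ j, c j * ψ j s := by
        refine Finset.sum_congr rfl fun j _ => ?_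
        rw [main j s]
    _ = f s := (hfe s).symm
end
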